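/- The number of noncrossing perfect pairings of k disjoint arcs together with L−2k uncrossed through-strands on L linearly ordered points (i.e., k-cap diagrams on L points) equals C(L,k) − C(L,k−1), where C denotes the binomial coefficient. -/

import Mathlib

/-- `P` is a `k`-cap diagram on `L` points: `k` disjoint arcs (pairs `(a,b)` with `a < b`),
no two arcs cross, and every point strictly under an arc is paired within that arc's span. -/
def IsCapDiagram (L k : ℕ) (P : Finset (Fin L × Fin L)) : Prop :=
  P.card = k ∧
  (∀ p ∈ P, p.1 < p.2) ∧
  (∀ p ∈ P, ∀ q ∈ P, p ≠ q → p.1 ≠ q.1 ∧ p.1 ≠ q.2 ∧ p.2 ≠ q.1 ∧ p.2 ≠ q.2) ∧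
  (∀ p ∈ P, ∀ q ∈ P, p.1 < q.1 → (p.2 < q.1 ∨ q.2 < p.2)) ∧
  (∀ p ∈ P, ∀ x : Fin L, p.1 < x → x < p.2 →
    ∃ q ∈ P, (q.1 = x ∨ q.2 = x) ∧ p.1 < q.1 ∧ q.2 < p.2)

namespace CapProof

open Finset

/-- The finset of all `k`-cap diagrams on `L` points. -/
noncomputable def DSet (L k : ℕ) : Finset (Finset (Fin L × Fin L)) :=
  @Finset.filter _ (IsCapDiagram L k) (Classical.decPred _) Finset.univ

lemma mem_DSet {L k : ℕ} {P : Finset (Fin L × Fin L)} :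
    P ∈ DSet L k ↔ IsCapDiagram L k P := by
  simp [DSet]

lemma ne_fst_snd {L k : ℕ} {P : Finset (Fin L × Fin L)} (h : IsCapDiagram L k P)
    {p q : Fin L × Fin L} (hp : p ∈ P) (hq : q ∈ P) : p.1 ≠ q.2 := by
  by_cases hpq : p = q
  · subst hpq; exact ne_of_lt (h.2.1 p hp)
  · exact (h.2.2.1 p hp q hq hpq).2.1

lemma two_k_le {L k : ℕ} {P : Finset (Fin L × Fin L)} (h : IsCapDiagram L k P) :
    2 * k ≤ L := by
  classical
  have hf : (P.image Prod.fst).card = k := by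
    rw [Finset.card_image_of_injOn, h.1]
    intro p hp q hq hpq
    by_contra hne
    exact (h.2.2.1 p hp q hq hne).1 hpq
  have hs : (P.image Prod.snd).card = k := by
    rw [Finset.card_image_of_injOn, h.1]
    intro p hp q hq hpq
    by_contra hne
    exact (h.2.2.1 p hp q hq hne).2.2.2 hpq
  have hd : Disjoint (P.image Prod.fst) (P.image Prod.snd) := by
    rw [Finset.disjoint_left]
    rintro a ha hb
    obtain ⟨p, hp, rfl⟩ := Finset.mem_image.mp ha
    obtain ⟨q, hq, hqa⟩ := Finset.mem_image.mp hb
    exact ne_fst_snd h hp hq hqa.symm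
  have := Finset.card_le_univ (P.image Prod.fst ∪ P.image Prod.snd)
  rw [Finset.card_union_of_disjoint hd, hf, hs, Fintype.card_fin] at this
  omega

lemma DSet_eq_empty {L k : ℕ} (h : L < 2 * k) : DSet L k = ∅ := by
  rw [Finset.eq_empty_iff_forall_notMem]
  intro P hP
  exact absurd (two_k_le (mem_DSet.mp hP)) (by omega)

lemma DSet_zero (L : ℕ) : DSet L 0 = {∅} := by
  ext P
  rw [mem_DSet, Finset.mem_singleton]
  constructor
  · intro h
    exact Finset.card_eq_zero.mp h.1
  · rintro rfl
    refine ⟨rfl, ?_, ?_, ?_, ?_⟩ <;> simp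

section Transfer

variable {L k : ℕ}

def pr (x : Fin (L+2)) : Fin (L+1) := ⟨min x.val L, by omega⟩

lemma pr_val {x : Fin (L+2)} (h : x.val ≤ L) : (pr x).val = x.val := by
  simp [pr, Nat.min_eq_left h]

def prP (p : Fin (L+2) × Fin (L+2)) : Fin (L+1) × Fin (L+1) := (pr p.1, pr p.2)

def upP (p : Fin (L+1) × Fin (L+1)) : Fin (L+2) × Fin (L+2) := (p.1.castSucc, p.2.castSucc)

lemma upP_injective : Function.Injective (upP (L := L)) := by
  intro p q h
  simp only [upP, Prod.ext_iff] at h ⊢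
  exact ⟨Fin.castSucc_injective _ h.1, Fin.castSucc_injective _ h.2⟩

lemma prP_upP (p : Fin (L+1) × Fin (L+1)) : prP (upP p) = p := by
  have h1 : (p.1.castSucc : Fin (L+2)).val ≤ L := by
    simpa using Nat.lt_succ_iff.mp p.1.isLt
  have h2 : (p.2.castSucc : Fin (L+2)).val ≤ L := by
    simpa using Nat.lt_succ_iff.mp p.2.isLt
  simp only [prP, upP, Prod.ext_iff]
  refine ⟨Fin.ext ?_, Fin.ext ?_⟩
  · rw [pr_val h1]; simp
  · rw [pr_val h2]; simp

lemma upP_prP {p : Fin (L+2) × Fin (L+2)} (h1 : p.1.val ≤ L) (h2 : p.2.val ≤ L) :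
    upP (prP p) = p := by
  simp only [prP, upP, Prod.ext_iff]
  exact ⟨Fin.ext (by rw [Fin.coe_castSucc, pr_val h1]),
    Fin.ext (by rw [Fin.coe_castSucc, pr_val h2])⟩

lemma isCap_upF {Q : Finset (Fin (L+1) × Fin (L+1))} :
    IsCapDiagram (L+2) k (Q.image upP) ↔ IsCapDiagram (L+1) k Q := by
  constructor
  · intro h
    refine ⟨?_, ?_, ?_, ?_, ?_⟩
    · rw [← Finset.card_image_of_injective Q upP_injective]; exact h.1
    · intro p hp
      have := h.2.1 (upP p) (Finset.mem_image_of_mem _ hp)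
      simpa [upP, Fin.castSucc_lt_castSucc_iff] using this
    · intro p hp q hq hne
      have := h.2.2.1 (upP p) (Finset.mem_image_of_mem _ hp)
        (upP q) (Finset.mem_image_of_mem _ hq)
        (fun hc => hne (upP_injective hc))
      simpa [upP, ne_eq, Fin.castSucc_inj] using this
    · intro p hp q hq hlt
      have := h.2.2.2.1 (upP p) (Finset.mem_image_of_mem _ hp)
        (upP q) (Finset.mem_image_of_mem _ hq)
        (by simpa [upP, Fin.castSucc_lt_castSucc_iff] using hlt)
      simpa [upP, Fin.castSucc_lt_castSucc_iff] using this
    · intro p hp x hx1 hx2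
      have := h.2.2.2.2 (upP p) (Finset.mem_image_of_mem _ hp) x.castSucc
        (by simpa [upP, Fin.castSucc_lt_castSucc_iff] using hx1)
        (by simpa [upP, Fin.castSucc_lt_castSucc_iff] using hx2)
      obtain ⟨q', hq', hor, h1, h2⟩ := this
      obtain ⟨q, hq, rfl⟩ := Finset.mem_image.mp hq'
      refine ⟨q, hq, ?_, ?_, ?_⟩
      · simpa [upP, Fin.castSucc_inj] using hor
      · simpa [upP, Fin.castSucc_lt_castSucc_iff] using h1
      · simpa [upP, Fin.castSucc_lt_castSucc_iff] using h2
  · intro h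
    refine ⟨?_, ?_, ?_, ?_, ?_⟩
    · rw [Finset.card_image_of_injective Q upP_injective]; exact h.1
    · intro p' hp'
      obtain ⟨p, hp, rfl⟩ := Finset.mem_image.mp hp'
      simpa [upP, Fin.castSucc_lt_castSucc_iff] using h.2.1 p hp
    · intro p' hp' q' hq' hne
      obtain ⟨p, hp, rfl⟩ := Finset.mem_image.mp hp'
      obtain ⟨q, hq, rfl⟩ := Finset.mem_image.mp hq'
      have hpq : p ≠ q := fun hc => hne (by rw [hc])
      have := h.2.2.1 p hp q hq hpq
      simpa [upP, ne_eq, Fin.castSucc_inj] using this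
    · intro p' hp' q' hq' hlt
      obtain ⟨p, hp, rfl⟩ := Finset.mem_image.mp hp'
      obtain ⟨q, hq, rfl⟩ := Finset.mem_image.mp hq'
      have := h.2.2.2.1 p hp q hq (by simpa [upP, Fin.castSucc_lt_castSucc_iff] using hlt)
      simpa [upP, Fin.castSucc_lt_castSucc_iff] using this
    · intro p' hp' x hx1 hx2
      obtain ⟨p, hp, rfl⟩ := Finset.mem_image.mp hp'
      have hxval : x.val < L + 1 := by
        have h2 : x.val < (upP p).2.val := hx2
        have : (upP p).2.val = p.2.val := by simp [upP]
        omega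
      set x' : Fin (L+1) := ⟨x.val, hxval⟩ with hx'
      have hxeq : x = x'.castSucc := by apply Fin.ext; simp [hx']
      have hlt1 : p.1 < x' := by
        have := hx1
        simp only [upP, Fin.lt_def] at this ⊢
        exact (show p.1.val < x.val by simpa using this)
      have hlt2 : x' < p.2 := by
        have := hx2
        simp only [upP, Fin.lt_def] at this ⊢
        exact (show x.val < p.2.val by simpa using this)
      obtain ⟨q, hq, hor, h1, h2⟩ := h.2.2.2.2 p hp x' hlt1 hlt2
      refine ⟨upP q, Finset.mem_image_of_mem _ hq, ?_, ?_, ?_⟩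
      · rcases hor with h' | h'
        · left; rw [hxeq]; simp [upP, Fin.castSucc_inj, h']
        · right; rw [hxeq]; simp [upP, Fin.castSucc_inj, h']
      · simpa [upP, Fin.castSucc_lt_castSucc_iff] using h1
      · simpa [upP, Fin.castSucc_lt_castSucc_iff] using h2

lemma upF_down {P : Finset (Fin (L+2) × Fin (L+2))}
    (h : ∀ p ∈ P, p.1.val ≤ L ∧ p.2.val ≤ L) :
    (P.image prP).image upP = P := by
  rw [Finset.image_image]
  calc P.image (upP ∘ prP) = P.image id :=
        Finset.image_congr (fun p hp => upP_prP (h p hp).1 (h p hp).2)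
    _ = P := Finset.image_id

lemma down_upF (Q : Finset (Fin (L+1) × Fin (L+1))) :
    (Q.image upP).image prP = Q := by
  rw [Finset.image_image]
  calc Q.image (prP ∘ upP) = Q.image id := Finset.image_congr (fun p _ => prP_upP p)
    _ = Q := Finset.image_id

end Transfer

section Arc

variable {L k : ℕ}

/-- Points of `Fin (L+1)` not used by any arc of `Q`. -/
noncomputable def Free (Q : Finset (Fin (L+1) × Fin (L+1))) : Finset (Fin (L+1)) :=
  @Finset.filter _ (fun x => ∀ p ∈ Q, p.1 ≠ x ∧ p.2 ≠ x) (Classical.decPred _) Finset.univ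

lemma mem_Free {Q : Finset (Fin (L+1) × Fin (L+1))} {x : Fin (L+1)} :
    x ∈ Free Q ↔ ∀ p ∈ Q, p.1 ≠ x ∧ p.2 ≠ x := by
  simp [Free]

noncomputable def mval (Q : Finset (Fin (L+1) × Fin (L+1))) : ℕ := (Free Q).sup Fin.val

lemma mval_le (Q : Finset (Fin (L+1) × Fin (L+1))) : mval Q ≤ L :=
  Finset.sup_le fun x _ => Nat.lt_succ_iff.mp x.isLt

noncomputable def mPt (Q : Finset (Fin (L+1) × Fin (L+1))) : Fin (L+2) :=
  ⟨mval Q, by have := mval_le Q; omega⟩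

noncomputable def upArc (Q : Finset (Fin (L+1) × Fin (L+1))) :
    Finset (Fin (L+2) × Fin (L+2)) :=
  insert (mPt Q, Fin.last (L+1)) (Q.image upP)

noncomputable def strip (P : Finset (Fin (L+2) × Fin (L+2))) :
    Finset (Fin (L+2) × Fin (L+2)) :=
  @Finset.filter _ (fun p => p.2 ≠ Fin.last (L+1)) (Classical.decPred _) P

lemma mem_strip {P : Finset (Fin (L+2) × Fin (L+2))} {p : Fin (L+2) × Fin (L+2)} :
    p ∈ strip P ↔ p ∈ P ∧ p.2 ≠ Fin.last (L+1) := by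
  simp [strip]

noncomputable def downArc (P : Finset (Fin (L+2) × Fin (L+2))) :
    Finset (Fin (L+1) × Fin (L+1)) :=
  (strip P).image prP

lemma ne_last_iff {x : Fin (L+2)} : x ≠ Fin.last (L+1) ↔ x.val ≤ L := by
  simp only [ne_eq, Fin.ext_iff, Fin.val_last]
  omega

/-- coordinates of arcs in `strip P` are at most `L` -/
lemma strip_bounds {P : Finset (Fin (L+2) × Fin (L+2))} (h : ∀ p ∈ P, p.1 < p.2) :
    ∀ p ∈ strip P, p.1.val ≤ L ∧ p.2.val ≤ L := by
  intro p hp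
  obtain ⟨hpP, hp2⟩ := mem_strip.mp hp
  have h2 : p.2.val ≤ L := ne_last_iff.mp hp2
  have h1 : p.1.val < p.2.val := h p hpP
  omega

lemma strip_eq_erase {P : Finset (Fin (L+2) × Fin (L+2))} {a : Fin (L+2)}
    (h : IsCapDiagram (L+2) (k+1) P) (ha : (a, Fin.last (L+1)) ∈ P) :
    strip P = P.erase (a, Fin.last (L+1)) := by
  ext p
  rw [mem_strip, Finset.mem_erase]
  constructor
  · rintro ⟨hpP, hp2⟩
    refine ⟨?_, hpP⟩
    intro hc
    exact hp2 (by rw [hc])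
  · rintro ⟨hne, hpP⟩
    refine ⟨hpP, ?_⟩
    intro hc
    exact (h.2.2.1 p hpP (a, Fin.last (L+1)) ha hne).2.2.2 hc

lemma strip_isCap {P : Finset (Fin (L+2) × Fin (L+2))} {a : Fin (L+2)}
    (h : IsCapDiagram (L+2) (k+1) P) (ha : (a, Fin.last (L+1)) ∈ P) :
    IsCapDiagram (L+2) k (strip P) := by
  have hsub : strip P ⊆ P := fun p hp => (mem_strip.mp hp).1
  refine ⟨?_, ?_, ?_, ?_, ?_⟩
  · rw [strip_eq_erase h ha, Finset.card_erase_of_mem ha, h.1]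
    omega
  · exact fun p hp => h.2.1 p (hsub hp)
  · exact fun p hp q hq hne => h.2.2.1 p (hsub hp) q (hsub hq) hne
  · exact fun p hp q hq hlt => h.2.2.2.1 p (hsub hp) q (hsub hq) hlt
  · intro p hp x hx1 hx2
    obtain ⟨q, hq, hor, h1, h2⟩ := h.2.2.2.2 p (hsub hp) x hx1 hx2
    refine ⟨q, ?_, hor, h1, h2⟩
    rw [mem_strip]
    refine ⟨hq, ne_last_iff.mpr ?_⟩
    have hq2 : q.2.val < p.2.val := h2
    have : p.2.val < L + 2 := p.2.isLt
    omega

lemma downArc_isCap {P : Finset (Fin (L+2) × Fin (L+2))} {a : Fin (L+2)}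
    (h : IsCapDiagram (L+2) (k+1) P) (ha : (a, Fin.last (L+1)) ∈ P) :
    IsCapDiagram (L+1) k (downArc P) := by
  apply (isCap_upF (k := k)).mp
  rw [downArc, upF_down (strip_bounds h.2.1)]
  exact strip_isCap h ha

lemma a_lt_last {P : Finset (Fin (L+2) × Fin (L+2))} {a : Fin (L+2)}
    (h : IsCapDiagram (L+2) (k+1) P) (ha : (a, Fin.last (L+1)) ∈ P) : a.val ≤ L := by
  have := h.2.1 _ ha
  have h2 : a.val < L + 1 := this
  omega

lemma mval_downArc {P : Finset (Fin (L+2) × Fin (L+2))} {a : Fin (L+2)}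
    (h : IsCapDiagram (L+2) (k+1) P) (ha : (a, Fin.last (L+1)) ∈ P) :
    mval (downArc P) = a.val := by
  have haL : a.val ≤ L := a_lt_last h ha
  have hfree : pr a ∈ Free (downArc P) := by
    rw [mem_Free]
    rintro q' hq'
    obtain ⟨q, hq, rfl⟩ := Finset.mem_image.mp hq'
    obtain ⟨hqP, hq2⟩ := mem_strip.mp hq
    have hqne : q ≠ (a, Fin.last (L+1)) := by
      intro hc; exact hq2 (by rw [hc])
    have hdis := h.2.2.1 q hqP (a, Fin.last (L+1)) ha hqne
    have hb := strip_bounds h.2.1 q hq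
    constructor
    · intro hc
      apply hdis.1
      apply Fin.ext
      have := congrArg Fin.val hc
      rwa [prP, pr_val hb.1, pr_val haL] at this
    · intro hc
      apply hdis.2.2.1
      apply Fin.ext
      have := congrArg Fin.val hc
      rwa [prP, pr_val hb.2, pr_val haL] at this
  have hub : ∀ x ∈ Free (downArc P), x.val ≤ a.val := by
    intro x hx
    by_contra hgt
    push_neg at hgt
    have hx1 : a < x.castSucc := by
      rw [Fin.lt_def, Fin.coe_castSucc]; omega
    have hx2 : x.castSucc < Fin.last (L+1) := by
      rw [Fin.lt_def, Fin.coe_castSucc, Fin.val_last]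
      exact x.isLt
    obtain ⟨q, hq, hor, h1, h2⟩ := h.2.2.2.2 (a, Fin.last (L+1)) ha x.castSucc hx1 hx2
    have hqs : q ∈ strip P := by
      rw [mem_strip]
      refine ⟨hq, ne_last_iff.mpr ?_⟩
      have : q.2.val < (Fin.last (L+1) : Fin (L+2)).val := h2
      rw [Fin.val_last] at this
      omega
    have hmem : prP q ∈ downArc P := Finset.mem_image_of_mem _ hqs
    have hb := strip_bounds h.2.1 q hqs
    have := mem_Free.mp hx (prP q) hmem
    rcases hor with h' | h'
    · apply this.1
      apply Fin.ext
      rw [prP, pr_val hb.1, h', Fin.coe_castSucc]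
    · apply this.2
      apply Fin.ext
      rw [prP, pr_val hb.2, h', Fin.coe_castSucc]
  refine le_antisymm (Finset.sup_le hub) ?_
  have := Finset.le_sup (f := Fin.val) hfree
  rwa [pr_val haL] at this

lemma upArc_downArc {P : Finset (Fin (L+2) × Fin (L+2))} {a : Fin (L+2)}
    (h : IsCapDiagram (L+2) (k+1) P) (ha : (a, Fin.last (L+1)) ∈ P) :
    upArc (downArc P) = P := by
  have hm : mPt (downArc P) = a := Fin.ext (mval_downArc h ha)
  rw [upArc, hm, downArc, upF_down (strip_bounds h.2.1), strip_eq_erase h ha,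
    Finset.insert_erase ha]

end Arc

section Beta

variable {L k : ℕ}

lemma free_nonempty {Q : Finset (Fin (L+1) × Fin (L+1))} (hQ : IsCapDiagram (L+1) k Q)
    (hk : 2 * k ≤ L) : (Free Q).Nonempty := by
  classical
  by_contra hne
  rw [Finset.not_nonempty_iff_eq_empty] at hne
  have hall : ∀ x : Fin (L+1), x ∈ Q.image Prod.fst ∪ Q.image Prod.snd := by
    intro x
    by_contra hx
    rw [Finset.mem_union, Finset.mem_image, Finset.mem_image] at hx
    push_neg at hx
    have : x ∈ Free Q := mem_Free.mpr (fun p hp => ⟨hx.1 p hp, hx.2 p hp⟩)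
    rw [hne] at this
    exact absurd this (Finset.notMem_empty x)
  have hsub : (Finset.univ : Finset (Fin (L+1))) ⊆ Q.image Prod.fst ∪ Q.image Prod.snd :=
    fun x _ => hall x
  have hcard := Finset.card_le_card hsub
  have hf : (Q.image Prod.fst).card = k := by
    rw [Finset.card_image_of_injOn, hQ.1]
    intro p hp q hq hpq
    by_contra hneq
    exact (hQ.2.2.1 p hp q hq hneq).1 hpq
  have hs : (Q.image Prod.snd).card = k := by
    rw [Finset.card_image_of_injOn, hQ.1]
    intro p hp q hq hpq
    by_contra hneq
    exact (hQ.2.2.1 p hp q hq hneq).2.2.2 hpq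
  have hd : Disjoint (Q.image Prod.fst) (Q.image Prod.snd) := by
    rw [Finset.disjoint_left]
    rintro a ha hb
    obtain ⟨p, hp, rfl⟩ := Finset.mem_image.mp ha
    obtain ⟨q, hq, hqa⟩ := Finset.mem_image.mp hb
    exact ne_fst_snd hQ hp hq hqa.symm
  rw [Finset.card_univ, Fintype.card_fin, Finset.card_union_of_disjoint hd, hf, hs] at hcard
  omega

lemma arc_avoid_mval {Q : Finset (Fin (L+1) × Fin (L+1))} (hQ : IsCapDiagram (L+1) k Q)
    (hk : 2 * k ≤ L) :
    ∀ q ∈ Q, q.2.val < mval Q ∨ mval Q < q.1.val := by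
  obtain ⟨m, hm, hmv⟩ := Finset.exists_mem_eq_sup (Free Q) (free_nonempty hQ hk) Fin.val
  have hmv' : mval Q = m.val := hmv
  intro q hq
  have h1 := (mem_Free.mp hm q hq).1
  have h2 := (mem_Free.mp hm q hq).2
  have h1v : q.1.val ≠ m.val := fun hc => h1 (Fin.ext hc)
  have h2v : q.2.val ≠ m.val := fun hc => h2 (Fin.ext hc)
  rw [hmv']
  rcases lt_or_gt_of_ne h1v with hlt | hgt
  · left
    by_contra hge
    push_neg at hge
    have hx1 : q.1 < m := by rw [Fin.lt_def]; omega
    have hx2 : m < q.2 := by rw [Fin.lt_def]; omega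
    obtain ⟨r, hr, hor, _, _⟩ := hQ.2.2.2.2 q hq m hx1 hx2
    have := mem_Free.mp hm r hr
    rcases hor with h' | h'
    · exact this.1 h'
    · exact this.2 h'
  · right; exact hgt

lemma endpoint_of_gt {Q : Finset (Fin (L+1) × Fin (L+1))} {x : Fin (L+1)}
    (hx : mval Q < x.val) : ∃ q ∈ Q, q.1 = x ∨ q.2 = x := by
  classical
  have hxf : x ∉ Free Q := by
    intro h
    have := Finset.le_sup (f := Fin.val) h
    have h2 : mval Q < x.val := hx
    exact absurd this (by exact Nat.not_le_of_lt (by exact h2))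
  rw [mem_Free] at hxf
  push_neg at hxf
  obtain ⟨q, hq, hor⟩ := hxf
  exact ⟨q, hq, by tauto⟩

lemma upArc_isCap {Q : Finset (Fin (L+1) × Fin (L+1))} (hQ : IsCapDiagram (L+1) k Q)
    (hk : 2 * k ≤ L) : IsCapDiagram (L+2) (k+1) (upArc Q) := by
  classical
  have himg : IsCapDiagram (L+2) k (Q.image upP) := isCap_upF.mpr hQ
  have hAnot : (mPt Q, Fin.last (L+1)) ∉ Q.image upP := by
    intro hc
    obtain ⟨q, hq, hqe⟩ := Finset.mem_image.mp hc
    have hval := congrArg (fun p : Fin (L+2) × Fin (L+2) => p.2.val) hqe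
    simp only [upP, Fin.coe_castSucc, Fin.val_last] at hval
    have := q.2.isLt
    omega
  have hmlt : (mPt Q : Fin (L+2)) < Fin.last (L+1) := by
    rw [Fin.lt_def, Fin.val_last]
    have h1 : (mPt Q).val = mval Q := rfl
    have := mval_le Q
    omega
  obtain ⟨m, hmF, hmvr⟩ := Finset.exists_mem_eq_sup (Free Q) (free_nonempty hQ hk) Fin.val
  have hmv' : mval Q = m.val := hmvr
  have hne1 : ∀ q ∈ Q, q.1.val ≠ mval Q := by
    intro q hq hc
    rw [hmv'] at hc
    exact (mem_Free.mp hmF q hq).1 (Fin.ext hc)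
  have hne2 : ∀ q ∈ Q, q.2.val ≠ mval Q := by
    intro q hq hc
    rw [hmv'] at hc
    exact (mem_Free.mp hmF q hq).2 (Fin.ext hc)
  refine ⟨?_, ?_, ?_, ?_, ?_⟩
  · rw [upArc, Finset.card_insert_of_notMem hAnot,
      Finset.card_image_of_injective _ upP_injective, hQ.1]
  · intro p hp
    rcases Finset.mem_insert.mp hp with rfl | hp'
    · exact hmlt
    · exact himg.2.1 p hp'
  · intro p hp q hq hne
    rcases Finset.mem_insert.mp hp with rfl | hp' <;>
      rcases Finset.mem_insert.mp hq with rfl | hq'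
    · exact absurd rfl hne
    · obtain ⟨q', hq'', rfl⟩ := Finset.mem_image.mp hq'
      refine ⟨?_, ?_, ?_, ?_⟩
      · intro hc
        have := congrArg Fin.val hc
        simp only [upP, Fin.coe_castSucc] at this
        exact hne1 q' hq'' this.symm
      · intro hc
        have := congrArg Fin.val hc
        simp only [upP, Fin.coe_castSucc] at this
        exact hne2 q' hq'' this.symm
      · intro hc
        have := congrArg Fin.val hc
        simp only [upP, Fin.coe_castSucc, Fin.val_last] at this
        have := q'.1.isLt
        omega
      · intro hc
        have := congrArg Fin.val hc
        simp only [upP, Fin.coe_castSucc, Fin.val_last] at this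
        have := q'.2.isLt
        omega
    · obtain ⟨p', hp'', rfl⟩ := Finset.mem_image.mp hp'
      refine ⟨?_, ?_, ?_, ?_⟩
      · intro hc
        have := congrArg Fin.val hc
        simp only [upP, Fin.coe_castSucc] at this
        exact hne1 p' hp'' this
      · intro hc
        have := congrArg Fin.val hc
        simp only [upP, Fin.coe_castSucc, Fin.val_last] at this
        have := p'.1.isLt
        omega
      · intro hc
        have := congrArg Fin.val hc
        simp only [upP, Fin.coe_castSucc] at this
        exact hne2 p' hp'' this
      · intro hc
        have := congrArg Fin.val hc
        simp only [upP, Fin.coe_castSucc, Fin.val_last] at this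
        have := p'.2.isLt
        omega
    · exact himg.2.2.1 p hp' q hq' hne
  · intro p hp q hq hlt
    rcases Finset.mem_insert.mp hp with rfl | hp' <;>
      rcases Finset.mem_insert.mp hq with rfl | hq'
    · exact absurd hlt (lt_irrefl _)
    · obtain ⟨q', hq'', rfl⟩ := Finset.mem_image.mp hq'
      right
      rw [Fin.lt_def]
      simp only [upP, Fin.coe_castSucc, Fin.val_last]
      exact q'.2.isLt
    · obtain ⟨p', hp'', rfl⟩ := Finset.mem_image.mp hp'
      left
      have hltv : p'.1.val < mval Q := by
        have := hlt
        rw [Fin.lt_def] at this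
        simpa [upP, mPt] using this
      rcases arc_avoid_mval hQ hk p' hp'' with h' | h'
      · rw [Fin.lt_def]
        simpa [upP, mPt] using h'
      · omega
    · exact himg.2.2.2.1 p hp' q hq' hlt
  · intro p hp x hx1 hx2
    rcases Finset.mem_insert.mp hp with rfl | hp'
    · have hxL : x.val ≤ L := by
        have := hx2
        rw [Fin.lt_def, Fin.val_last] at this
        omega
      have hxm : mval Q < x.val := by
        have := hx1
        rw [Fin.lt_def] at this
        exact this
      set x' : Fin (L+1) := ⟨x.val, by omega⟩ with hx'
      obtain ⟨q, hq, hor⟩ := endpoint_of_gt (Q := Q) (x := x') hxm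
      rcases arc_avoid_mval hQ hk q hq with hbad | hgood
      · exfalso
        have hq12 : q.1.val < q.2.val := hQ.2.1 q hq
        rcases hor with h' | h'
        · have : q.1.val = x.val := congrArg Fin.val h'
          omega
        · have : q.2.val = x.val := congrArg Fin.val h'
          omega
      · refine ⟨upP q, Finset.mem_insert_of_mem (Finset.mem_image_of_mem _ hq), ?_, ?_, ?_⟩
        · rcases hor with h' | h'
          · left
            apply Fin.ext
            simp only [upP, Fin.coe_castSucc]
            rw [h']
          · right
            apply Fin.ext
            simp only [upP, Fin.coe_castSucc]
            rw [h']
        · rw [Fin.lt_def]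
          simpa [upP, mPt] using hgood
        · rw [Fin.lt_def]
          simp only [upP, Fin.coe_castSucc, Fin.val_last]
          exact q.2.isLt
    · obtain ⟨q, hqmem, hor, h1, h2⟩ := himg.2.2.2.2 p hp' x hx1 hx2
      exact ⟨q, Finset.mem_insert_of_mem hqmem, hor, h1, h2⟩

lemma downArc_upArc (Q : Finset (Fin (L+1) × Fin (L+1))) :
    downArc (upArc Q) = Q := by
  have hstrip : strip (upArc Q) = Q.image upP := by
    ext p
    rw [mem_strip, upArc, Finset.mem_insert]
    constructor
    · rintro ⟨h1 | h1, h2⟩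
      · exfalso
        apply h2
        rw [h1]
      · exact h1
    · intro hp
      obtain ⟨q, hq, rfl⟩ := Finset.mem_image.mp hp
      refine ⟨Or.inr (Finset.mem_image_of_mem _ hq), ne_last_iff.mpr ?_⟩
      simp only [upP, Fin.coe_castSucc]
      exact Nat.lt_succ_iff.mp q.2.isLt
  rw [downArc, hstrip, down_upF]

end Beta

lemma recurrence (L k : ℕ) (hk : 2 * (k+1) ≤ L + 2) :
    (DSet (L+2) (k+1)).card = (DSet (L+1) (k+1)).card + (DSet (L+1) k).card := by
  classical
  have hk' : 2 * k ≤ L := by omega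
  have hsplit := Finset.card_filter_add_card_filter_not
    (s := DSet (L+2) (k+1)) (p := fun P => ∀ p ∈ P, p.2 ≠ Fin.last (L+1))
  have hA : ((DSet (L+2) (k+1)).filter (fun P => ∀ p ∈ P, p.2 ≠ Fin.last (L+1))).card
      = (DSet (L+1) (k+1)).card := by
    apply Finset.card_nbij' (i := fun P => P.image prP) (j := fun Q => Q.image upP)
    · intro P hP
      rw [Finset.mem_coe, Finset.mem_filter] at hP
      obtain ⟨hP1, hno⟩ := hP
      rw [mem_DSet] at hP1; rw [Finset.mem_coe, mem_DSet]
      have hbound : ∀ p ∈ P, p.1.val ≤ L ∧ p.2.val ≤ L := by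
        intro p hp
        have h2 := ne_last_iff.mp (hno p hp)
        have h1 : p.1.val < p.2.val := hP1.2.1 p hp
        exact ⟨by omega, h2⟩
      apply (isCap_upF (k := k+1)).mp
      rw [upF_down hbound]
      exact hP1
    · intro Q hQ
      rw [Finset.mem_coe, mem_DSet] at hQ
      rw [Finset.mem_coe, Finset.mem_filter, mem_DSet]
      refine ⟨isCap_upF.mpr hQ, ?_⟩
      intro p hp
      obtain ⟨q, hq, rfl⟩ := Finset.mem_image.mp hp
      rw [ne_last_iff]
      simp only [upP, Fin.coe_castSucc]
      exact Nat.lt_succ_iff.mp q.2.isLt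
    · intro P hP
      rw [Finset.mem_coe, Finset.mem_filter, mem_DSet] at hP
      obtain ⟨hP1, hno⟩ := hP
      have hbound : ∀ p ∈ P, p.1.val ≤ L ∧ p.2.val ≤ L := by
        intro p hp
        have h2 := ne_last_iff.mp (hno p hp)
        have h1 : p.1.val < p.2.val := hP1.2.1 p hp
        exact ⟨by omega, h2⟩
      exact upF_down hbound
    · intro Q _
      exact down_upF Q
  have hB : ((DSet (L+2) (k+1)).filter (fun P => ¬ ∀ p ∈ P, p.2 ≠ Fin.last (L+1))).card
      = (DSet (L+1) k).card := by
    apply Finset.card_nbij' (i := downArc) (j := upArc)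
    · intro P hP
      rw [Finset.mem_coe, Finset.mem_filter, mem_DSet] at hP
      obtain ⟨h1, h2⟩ := hP
      push_neg at h2
      obtain ⟨p, hp, hp2⟩ := h2
      have ha : (p.1, Fin.last (L+1)) ∈ P := by rw [← hp2]; simpa using hp
      rw [Finset.mem_coe, mem_DSet]
      exact downArc_isCap h1 ha
    · intro Q hQ
      rw [Finset.mem_coe, mem_DSet] at hQ
      rw [Finset.mem_coe, Finset.mem_filter, mem_DSet]
      refine ⟨upArc_isCap hQ hk', ?_⟩
      push_neg
      exact ⟨(mPt Q, Fin.last (L+1)), Finset.mem_insert_self _ _, rfl⟩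
    · intro P hP
      rw [Finset.mem_coe, Finset.mem_filter, mem_DSet] at hP
      obtain ⟨h1, h2⟩ := hP
      push_neg at h2
      obtain ⟨p, hp, hp2⟩ := h2
      have ha : (p.1, Fin.last (L+1)) ∈ P := by rw [← hp2]; simpa using hp
      exact upArc_downArc h1 ha
    · intro Q _
      exact downArc_upArc Q
  omega

lemma count (L : ℕ) : ∀ k : ℕ, 2 * k ≤ L →
    ((DSet L k).card : ℤ) = L.choose k - (if k = 0 then 0 else L.choose (k-1)) := by
  induction L with
  | zero =>
    intro k hk
    have hk0 : k = 0 := by omega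
    subst hk0
    simp [DSet_zero]
  | succ M ih =>
    intro k hk
    match k with
    | 0 => simp [DSet_zero]
    | j+1 =>
      match M with
      | 0 => exact absurd hk (by omega)
      | Nat.succ N =>
        have hrec := recurrence N j (by omega)
        have hrecZ : ((DSet (N+2) (j+1)).card : ℤ)
            = ((DSet (N+1) (j+1)).card : ℤ) + ((DSet (N+1) j).card : ℤ) := by
          exact_mod_cast hrec
        have hj := ih j (by omega)
        push_cast at hj
        have hj1 : ((DSet (N+1) (j+1)).card : ℤ)
            = (N+1).choose (j+1) - (N+1).choose j := by
          by_cases hc : 2*(j+1) ≤ N+1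
          · have := ih (j+1) hc
            simpa using this
          · have hN : N + 1 = 2*j + 1 := by omega
            have hzero : DSet (N+1) (j+1) = ∅ := DSet_eq_empty (by omega)
            have hsymm : (2*j+1).choose (j+1) = (2*j+1).choose j := by
              have := Nat.choose_symm (n := 2*j+1) (k := j) (by omega)
              simpa [show 2*j+1-j = j+1 by omega] using this
            rw [hzero, hN, hsymm]
            simp
        have pascal1 : ((N+2).choose (j+1) : ℤ)
            = (N+1).choose j + (N+1).choose (j+1) := by
          exact_mod_cast Nat.choose_succ_succ (N+1) j
        push_cast
        rw [hrecZ, hj1, hj]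
        by_cases hj0 : j = 0
        · subst hj0
          simp only [if_pos rfl]
          rw [pascal1]
          simp [Nat.choose_one_right, Nat.choose_zero_right]
        · have hjpos : 0 < j := Nat.pos_of_ne_zero hj0
          rw [if_neg hj0]
          have pascal2 : ((N+2).choose j : ℤ)
              = (N+1).choose (j-1) + (N+1).choose j := by
            have h := Nat.choose_succ_succ (N+1) (j-1)
            simp only [Nat.succ_eq_add_one] at h
            rw [show j - 1 + 1 = j by omega] at h
            exact_mod_cast h
          rw [pascal1, pascal2]
          ring

end CapProof

theorem capDiagram_count (L k : ℕ) (hk : 2 * k ≤ L) :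
    (Nat.card {P : Finset (Fin L × Fin L) // IsCapDiagram L k P} : ℤ)
      = L.choose k - (if k = 0 then 0 else L.choose (k - 1)) := by
  classical
  have h1 : Nat.card {P : Finset (Fin L × Fin L) // IsCapDiagram L k P}
      = (CapProof.DSet L k).card := by
    rw [Nat.card_eq_fintype_card, Fintype.card_subtype]
    simp [CapProof.DSet]
  rw [h1]
  exact CapProof.count L k hk
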